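/- Let m > n ≥ 1 be integers. In V = ℝ^{m+n}, with standard basis vectors denoted ε_1,…,ε_m,δ_1,…,δ_n, let W = S_m × S_n act by permuting the ε-coordinates and the δ-coordinates separately, let ρ_0 := Σ_{i=1}^m ((m+1−2i)/2)ε_i + Σ_{j=1}^n ((n+1−2j)/2)δ_j, let Π := {ε_1−δ_1, δ_1−ε_2, ε_2−δ_2, …, ε_n−δ_n, δ_n−ε_{n+1}, ε_{n+1}−ε_{n+2}, …, ε_{m−1}−ε_m}, and let Q^+ be the set of linear combinations of elements of Π with nonnegative integer coefficients. If λ ∈ V has trivial stabilizer in W and the whole orbit Wλ is contained in ρ_0 − Q^+, then λ ∈ Wρ_0. -/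

import Mathlib

/-- The action of `(σ,τ) ∈ S_m × S_n` on `ℝ^{m+n}` permuting the `ε`- and the
`δ`-coordinates separately (so that `ε_i ↦ ε_{σ(i)}`, `δ_j ↦ δ_{τ(j)}`). -/
def glAct (m n : ℕ) (σ : Equiv.Perm (Fin m)) (τ : Equiv.Perm (Fin n))
    (f : Fin m ⊕ Fin n → ℝ) : Fin m ⊕ Fin n → ℝ :=
  fun z => f (Sum.map (⇑σ.symm) (⇑τ.symm) z)

/-- `ρ₀ = Σ_i ((m+1−2i)/2)ε_i + Σ_j ((n+1−2j)/2)δ_j` for `gl(m|n)`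
(`1`-indexed; here coordinates are `0`-indexed). -/
noncomputable def glRho (m n : ℕ) : Fin m ⊕ Fin n → ℝ :=
  Sum.elim (fun i => ((m : ℝ) - 1 - 2 * (i : ℕ)) / 2)
    (fun j => ((n : ℝ) - 1 - 2 * (j : ℕ)) / 2)

/-- The simple roots `Π = {ε_1−δ_1, δ_1−ε_2, ε_2−δ_2, …, ε_n−δ_n, δ_n−ε_{n+1},
ε_{n+1}−ε_{n+2}, …, ε_{m−1}−ε_m}` of `gl(m|n)` (written `0`-indexed). -/
noncomputable def glSimple (m n : ℕ) : Set (Fin m ⊕ Fin n → ℝ) :=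
  {v | (∃ i : Fin n, ∃ hi : (i : ℕ) < m,
          v = Pi.single (Sum.inl ⟨(i : ℕ), hi⟩) 1 - Pi.single (Sum.inr i) 1) ∨
       (∃ i : Fin n, ∃ hi : (i : ℕ) + 1 < m,
          v = Pi.single (Sum.inr i) 1 - Pi.single (Sum.inl ⟨(i : ℕ) + 1, hi⟩) 1) ∨
       (∃ i : Fin m, ∃ hi : (i : ℕ) + 1 < m, n ≤ (i : ℕ) ∧
          v = Pi.single (Sum.inl i) 1 - Pi.single (Sum.inl ⟨(i : ℕ) + 1, hi⟩) 1)}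

lemma strictMono_fin_le {k : ℕ} {f : Fin k → ℕ} (hf : StrictMono f) : ∀ j : Fin k, (j : ℕ) ≤ f j := by
  suffices h : ∀ v : ℕ, ∀ j : Fin k, (j : ℕ) = v → v ≤ f j by intro j; exact h _ j rfl
  intro v
  induction v with
  | zero => intro j _; exact Nat.zero_le _
  | succ v ih =>
    intro j hj
    have hv : v < k := by omega
    have h1 := hf (show (⟨v, hv⟩ : Fin k) < j by simp [Fin.lt_def, hj])
    have h2 := ih ⟨v, hv⟩ rfl
    omega

lemma sum_lb {k : ℕ} (g : Fin k → ℕ) (hg : Function.Injective g) :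
    (∑ j ∈ Finset.range k, j) ≤ ∑ j, g j ∧
      (∑ j, g j = ∑ j ∈ Finset.range k, j → ∀ j, g j < k) := by
  classical
  set S : Finset ℕ := Finset.image g Finset.univ with hS
  have hcard : S.card = k := by
    rw [hS, Finset.card_image_of_injective _ hg, Finset.card_univ, Fintype.card_fin]
  set ι := S.orderIsoOfFin hcard with hι
  have hsum : ∑ j, g j = ∑ j : Fin k, ((ι j : ℕ)) := by
    have h1 : ∑ x ∈ S, x = ∑ j, g j := Finset.sum_image (fun x _ y _ h => hg h)
    rw [← h1, ← Finset.sum_coe_sort S (fun x => x)]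
    exact (Equiv.sum_comp ι.toEquiv (fun x : {x // x ∈ S} => (x : ℕ))).symm
  have hmono : StrictMono (fun j : Fin k => ((ι j : ℕ))) :=
    fun j j' h => Subtype.coe_lt_coe.mpr (ι.strictMono h)
  have hle : ∀ j : Fin k, (j : ℕ) ≤ (ι j : ℕ) := strictMono_fin_le hmono
  have hineq : ∑ j ∈ Finset.range k, j ≤ ∑ j, g j := by
    rw [hsum, ← Fin.sum_univ_eq_sum_range (fun i => i) k]
    exact Finset.sum_le_sum (fun j _ => hle j)
  refine ⟨hineq, fun heq j => ?_⟩
  have heq2 : ∑ j : Fin k, ((ι j : ℕ)) = ∑ j : Fin k, (j : ℕ) := by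
    rw [← hsum, heq]
    exact (Fin.sum_univ_eq_sum_range (fun i => i) k).symm
  have hall : ∀ j ∈ (Finset.univ : Finset (Fin k)), (j : ℕ) = ((ι j : ℕ)) :=
    (Finset.sum_eq_sum_iff_of_le (fun j _ => hle j)).mp heq2.symm
  have hgj : g j ∈ S := Finset.mem_image_of_mem g (Finset.mem_univ j)
  have hx : ((ι (ι.symm ⟨g j, hgj⟩) : ℕ)) = g j := by rw [OrderIso.apply_symm_apply]
  have h2 := hall (ι.symm ⟨g j, hgj⟩) (Finset.mem_univ _)
  have h3 : ((ι.symm ⟨g j, hgj⟩ : Fin k) : ℕ) < k := (ι.symm ⟨g j, hgj⟩).isLt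
  omega

lemma closure_facts (m n : ℕ) (hm : 0 < m) (hn : 0 < n) {q : Fin m ⊕ Fin n → ℝ}
    (hq : q ∈ AddSubmonoid.closure (glSimple m n)) :
    (∑ z, q z = 0) ∧ 0 ≤ q (Sum.inl ⟨0, hm⟩) ∧ (∃ k : ℤ, q (Sum.inl ⟨0, hm⟩) = (k : ℝ)) ∧
      0 ≤ q (Sum.inl ⟨0, hm⟩) + q (Sum.inr ⟨0, hn⟩) ∧
      (∃ k : ℤ, q (Sum.inl ⟨0, hm⟩) + q (Sum.inr ⟨0, hn⟩) = (k : ℝ)) := by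
  classical
  refine AddSubmonoid.closure_induction
    (motive := fun x _ => (∑ z, x z = 0) ∧ 0 ≤ x (Sum.inl ⟨0, hm⟩) ∧
      (∃ k : ℤ, x (Sum.inl ⟨0, hm⟩) = (k : ℝ)) ∧
      0 ≤ x (Sum.inl ⟨0, hm⟩) + x (Sum.inr ⟨0, hn⟩) ∧
      (∃ k : ℤ, x (Sum.inl ⟨0, hm⟩) + x (Sum.inr ⟨0, hn⟩) = (k : ℝ))) ?_ ?_ ?_ hq
  · rintro x (⟨i, hi, rfl⟩ | ⟨i, hi, rfl⟩ | ⟨i, hi, hni, rfl⟩) <;>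
      refine ⟨by simp [Pi.sub_apply, Finset.sum_sub_distrib, Pi.single_apply,
        Finset.sum_ite_eq'], ?_, ?_, ?_, ?_⟩
    · by_cases h0 : (i : ℕ) = 0 <;>
        simp [Pi.sub_apply, Pi.single_apply, Fin.ext_iff, h0]
    · by_cases h0 : (i : ℕ) = 0
      · exact ⟨1, by simp [Pi.sub_apply, Pi.single_apply, Fin.ext_iff, h0]⟩
      · exact ⟨0, by simp [Pi.sub_apply, Pi.single_apply, Fin.ext_iff, h0, Ne.symm h0]⟩
    · by_cases h0 : (i : ℕ) = 0 <;>
        simp [Pi.sub_apply, Pi.single_apply, Fin.ext_iff, h0]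
    · refine ⟨0, ?_⟩
      by_cases h0 : (i : ℕ) = 0
      · simp [Pi.sub_apply, Pi.single_apply, Fin.ext_iff, h0]
      · simp [Pi.sub_apply, Pi.single_apply, Fin.ext_iff, h0, Ne.symm h0]
    · by_cases h0 : (i : ℕ) = 0 <;>
        simp [Pi.sub_apply, Pi.single_apply, Fin.ext_iff, h0]
    · exact ⟨0, by simp [Pi.sub_apply, Pi.single_apply, Fin.ext_iff]⟩
    · by_cases h0 : (i : ℕ) = 0 <;>
        simp [Pi.sub_apply, Pi.single_apply, Fin.ext_iff, h0]
    · by_cases h0 : (i : ℕ) = 0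
      · exact ⟨1, by simp [Pi.sub_apply, Pi.single_apply, Fin.ext_iff, h0]⟩
      · exact ⟨0, by simp [Pi.sub_apply, Pi.single_apply, Fin.ext_iff, h0, Ne.symm h0]⟩
    · have h1 : (i : ℕ) ≠ 0 := by omega
      simp [Pi.sub_apply, Pi.single_apply, Fin.ext_iff, Ne.symm h1]
    · have h1 : (i : ℕ) ≠ 0 := by omega
      exact ⟨0, by simp [Pi.sub_apply, Pi.single_apply, Fin.ext_iff, Ne.symm h1]⟩
    · have h1 : (i : ℕ) ≠ 0 := by omega
      simp [Pi.sub_apply, Pi.single_apply, Fin.ext_iff, Ne.symm h1]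
    · have h1 : (i : ℕ) ≠ 0 := by omega
      exact ⟨0, by simp [Pi.sub_apply, Pi.single_apply, Fin.ext_iff, Ne.symm h1]⟩
  · exact ⟨by simp, by simp, ⟨0, by simp⟩, by simp, ⟨0, by simp⟩⟩
  · rintro x y hx hy ⟨hx1, hx2, ⟨kx, hkx⟩, hx4, ⟨kx2, hkx2⟩⟩ ⟨hy1, hy2, ⟨ky, hky⟩, hy4, ⟨ky2, hky2⟩⟩
    refine ⟨by simp [Pi.add_apply, Finset.sum_add_distrib, hx1, hy1], by
      simp only [Pi.add_apply]; linarith, ⟨kx + ky, by push_cast [Pi.add_apply, hkx, hky]; ring⟩,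
      by simp only [Pi.add_apply]; linarith, ⟨kx2 + ky2, by push_cast [Pi.add_apply]; linarith⟩⟩

/-- For `gl(m|n)` with `m > n`, the orbit `Wρ₀` is the only regular `W`-orbit
lying entirely in `ρ₀ − Q⁺`. -/
theorem gl_regular_orbit (m n : ℕ) (hn : 1 ≤ n) (hmn : n < m)
    (lam : Fin m ⊕ Fin n → ℝ)
    (hstab : ∀ (σ : Equiv.Perm (Fin m)) (τ : Equiv.Perm (Fin n)),
      glAct m n σ τ lam = lam → σ = 1 ∧ τ = 1)
    (horb : ∀ (σ : Equiv.Perm (Fin m)) (τ : Equiv.Perm (Fin n)),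
      glRho m n - glAct m n σ τ lam ∈ AddSubmonoid.closure (glSimple m n)) :
    ∃ (σ : Equiv.Perm (Fin m)) (τ : Equiv.Perm (Fin n)),
      lam = glAct m n σ τ (glRho m n) := by
  classical
  have hm : 0 < m := lt_of_le_of_lt (Nat.zero_le n) hmn
  set r : ℝ := ((m : ℝ) - 1) / 2 with hr
  set s : ℝ := ((n : ℝ) - 1) / 2 with hs
  -- injectivity of coordinates
  have hainj : ∀ i i' : Fin m, lam (Sum.inl i) = lam (Sum.inl i') → i = i' := by
    intro i i' hii
    by_contra hne
    have hfix : glAct m n (Equiv.swap i i') 1 lam = lam := by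
      funext z
      cases z with
      | inl w =>
        simp only [glAct, Sum.map_inl, Equiv.symm_swap]
        rcases eq_or_ne w i with rfl | hwi
        · rw [Equiv.swap_apply_left]; exact hii.symm
        · rcases eq_or_ne w i' with rfl | hwi'
          · rw [Equiv.swap_apply_right]; exact hii
          · rw [Equiv.swap_apply_of_ne_of_ne hwi hwi']
      | inr w => simp [glAct, Equiv.Perm.one_symm]
    exact hne ((Equiv.swap_eq_one_iff).mp (hstab _ _ hfix).1)
  have hbinj : ∀ j j' : Fin n, lam (Sum.inr j) = lam (Sum.inr j') → j = j' := by
    intro j j' hjj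
    by_contra hne
    have hfix : glAct m n 1 (Equiv.swap j j') lam = lam := by
      funext z
      cases z with
      | inr w =>
        simp only [glAct, Sum.map_inr, Equiv.symm_swap]
        rcases eq_or_ne w j with rfl | hwj
        · rw [Equiv.swap_apply_left]; exact hjj.symm
        · rcases eq_or_ne w j' with rfl | hwj'
          · rw [Equiv.swap_apply_right]; exact hjj
          · rw [Equiv.swap_apply_of_ne_of_ne hwj hwj']
      | inl w => simp [glAct, Equiv.Perm.one_symm]
    exact hne ((Equiv.swap_eq_one_iff).mp (hstab _ _ hfix).2)
  -- values of ρ₀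
  have hρ1 : glRho m n (Sum.inl ⟨0, hm⟩) = r := by simp [glRho, hr]
  have hρ2 : glRho m n (Sum.inr ⟨0, hn⟩) = s := by simp [glRho, hs]
  -- the single-coordinate facts
  have key1 : ∀ i : Fin m, 0 ≤ r - lam (Sum.inl i) ∧
      ∃ k : ℤ, r - lam (Sum.inl i) = (k : ℝ) := by
    intro i
    have hv : (glRho m n - glAct m n (Equiv.swap ⟨0, hm⟩ i) 1 lam) (Sum.inl ⟨0, hm⟩)
        = r - lam (Sum.inl i) := by
      simp only [Pi.sub_apply, hρ1, glAct, Sum.map_inl, Equiv.symm_swap,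
        Equiv.swap_apply_left]
    obtain ⟨-, h2, h3, -, -⟩ := closure_facts m n hm hn (horb (Equiv.swap ⟨0, hm⟩ i) 1)
    rw [hv] at h2 h3
    exact ⟨h2, h3⟩
  have key2 : ∀ (i : Fin m) (j : Fin n),
      0 ≤ (r - lam (Sum.inl i)) + (s - lam (Sum.inr j)) ∧
      ∃ k : ℤ, (r - lam (Sum.inl i)) + (s - lam (Sum.inr j)) = (k : ℝ) := by
    intro i j
    have hv : (glRho m n - glAct m n (Equiv.swap ⟨0, hm⟩ i) (Equiv.swap ⟨0, hn⟩ j) lam)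
          (Sum.inl ⟨0, hm⟩)
        + (glRho m n - glAct m n (Equiv.swap ⟨0, hm⟩ i) (Equiv.swap ⟨0, hn⟩ j) lam)
          (Sum.inr ⟨0, hn⟩)
        = (r - lam (Sum.inl i)) + (s - lam (Sum.inr j)) := by
      simp only [Pi.sub_apply, hρ1, hρ2, glAct, Sum.map_inl, Sum.map_inr, Equiv.symm_swap,
        Equiv.swap_apply_left]
    obtain ⟨-, -, -, h4, h5⟩ :=
      closure_facts m n hm hn (horb (Equiv.swap ⟨0, hm⟩ i) (Equiv.swap ⟨0, hn⟩ j))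
    rw [hv] at h4 h5
    exact ⟨h4, h5⟩
  -- Gauss sums
  have hGauss : ∀ k : ℕ, 1 ≤ k →
      ((∑ t ∈ Finset.range k, t : ℕ) : ℝ) = (k : ℝ) * ((k : ℝ) - 1) / 2 := by
    intro k hk
    have h2 := Finset.sum_range_id_mul_two k
    have h3 := congrArg (fun x : ℕ => (x : ℝ)) h2
    push_cast [Nat.cast_sub hk] at h3
    push_cast
    linarith
  -- total sum is zero
  have hact1 : glAct m n 1 1 lam = lam := by funext z; cases z <;> simp [glAct, Equiv.Perm.one_symm]
  have hsum0 : ∑ i, lam (Sum.inl i) + ∑ j, lam (Sum.inr j) = 0 := by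
    obtain ⟨h1, -, -, -, -⟩ := closure_facts m n hm hn (horb 1 1)
    rw [hact1] at h1
    rw [Fintype.sum_sum_type] at h1
    simp only [Pi.sub_apply] at h1
    rw [Finset.sum_sub_distrib, Finset.sum_sub_distrib] at h1
    have hg1 : ∑ i : Fin m, glRho m n (Sum.inl i) = 0 := by
      have : ∑ i : Fin m, glRho m n (Sum.inl i)
          = ∑ t ∈ Finset.range m, (((m : ℝ) - 1 - 2 * t) / 2) :=
        Fin.sum_univ_eq_sum_range (fun t : ℕ => ((m : ℝ) - 1 - 2 * t) / 2) m
      rw [this]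
      have hsplit : ∀ t : ℕ, ((m : ℝ) - 1 - 2 * t) / 2 = ((m : ℝ) - 1) / 2 - t := by
        intro t; ring
      simp_rw [hsplit]
      rw [Finset.sum_sub_distrib, Finset.sum_const, Finset.card_range, nsmul_eq_mul]
      rw [show ∑ t ∈ Finset.range m, (t : ℝ) = ((∑ t ∈ Finset.range m, t : ℕ) : ℝ) from
        (Nat.cast_sum _ _).symm, hGauss m hm]
      ring
    have hg2 : ∑ j : Fin n, glRho m n (Sum.inr j) = 0 := by
      have : ∑ j : Fin n, glRho m n (Sum.inr j)
          = ∑ t ∈ Finset.range n, (((n : ℝ) - 1 - 2 * t) / 2) :=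
        Fin.sum_univ_eq_sum_range (fun t : ℕ => ((n : ℝ) - 1 - 2 * t) / 2) n
      rw [this]
      have hsplit : ∀ t : ℕ, ((n : ℝ) - 1 - 2 * t) / 2 = ((n : ℝ) - 1) / 2 - t := by
        intro t; ring
      simp_rw [hsplit]
      rw [Finset.sum_sub_distrib, Finset.sum_const, Finset.card_range, nsmul_eq_mul]
      rw [show ∑ t ∈ Finset.range n, (t : ℝ) = ((∑ t ∈ Finset.range n, t : ℕ) : ℝ) from
        (Nat.cast_sum _ _).symm, hGauss n hn]
      ring
    rw [hg1, hg2] at h1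
    linarith
  -- extract the natural numbers c i
  choose kc hkc using fun i => (key1 i).2
  have hkcnn : ∀ i, 0 ≤ kc i := by
    intro i
    have h := (key1 i).1
    rw [hkc i] at h
    exact_mod_cast h
  set c : Fin m → ℕ := fun i => (kc i).toNat with hc_def
  have hc : ∀ i, r - lam (Sum.inl i) = (c i : ℝ) := by
    intro i
    have h : ((kc i).toNat : ℤ) = kc i := Int.toNat_of_nonneg (hkcnn i)
    rw [hkc i, hc_def]
    exact_mod_cast congrArg (fun t : ℤ => (t : ℝ)) h.symm
  have hcinj : Function.Injective c := by
    intro i i' h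
    apply hainj
    have h1 := hc i
    have h2 := hc i'
    rw [h] at h1
    linarith
  -- minimal value μ
  obtain ⟨i0, -, hi0⟩ := Finset.exists_min_image (Finset.univ : Finset (Fin m)) c
    ⟨⟨0, hm⟩, Finset.mem_univ _⟩
  set μ : ℕ := c i0 with hμ_def
  have hμle : ∀ i, μ ≤ c i := fun i => hi0 i (Finset.mem_univ i)
  -- extract the integers e j
  choose kd hkd using fun j => (key2 i0 j).2
  have hkdnn : ∀ j, 0 ≤ kd j := by
    intro j
    have h := (key2 i0 j).1
    rw [hkd j] at h
    exact_mod_cast h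
  set e : Fin n → ℤ := fun j => kd j - μ with he_def
  have he : ∀ j, s - lam (Sum.inr j) = (e j : ℝ) := by
    intro j
    have h1 := hkd j
    have h2 := hc i0
    rw [he_def]
    push_cast
    linarith
  have hemin : ∀ j, -(μ : ℤ) ≤ e j := by
    intro j
    have := hkdnn j
    simp only [he_def]
    omega
  set E : Fin n → ℕ := fun j => (e j + μ).toNat with hE_def
  have hE : ∀ j, (E j : ℤ) = e j + μ := by
    intro j
    rw [hE_def]
    exact Int.toNat_of_nonneg (by have := hemin j; omega)
  have heinj : ∀ j j', e j = e j' → j = j' := by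
    intro j j' h
    apply hbinj
    have h1 := he j
    have h2 := he j'
    rw [h] at h1
    linarith
  have hEinj : Function.Injective E := by
    intro j j' h
    apply heinj
    have h1 := hE j
    have h2 := hE j'
    rw [h] at h1
    omega
  -- the sum identity over ℤ
  have hsum1 : ((∑ i, c i : ℕ) : ℝ) + ((∑ j, e j : ℤ) : ℝ)
      = ((∑ t ∈ Finset.range m, t : ℕ) : ℝ) + ((∑ t ∈ Finset.range n, t : ℕ) : ℝ) := by
    have h1 : ∑ i, lam (Sum.inl i) = (m : ℝ) * r - ∑ i, (c i : ℝ) := by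
      have : ∀ i : Fin m, lam (Sum.inl i) = r - (c i : ℝ) := fun i => by have := hc i; linarith
      rw [Finset.sum_congr rfl (fun i _ => this i), Finset.sum_sub_distrib,
        Finset.sum_const, Finset.card_univ, Fintype.card_fin, nsmul_eq_mul]
    have h2 : ∑ j, lam (Sum.inr j) = (n : ℝ) * s - ∑ j, ((e j : ℤ) : ℝ) := by
      have : ∀ j : Fin n, lam (Sum.inr j) = s - ((e j : ℤ) : ℝ) := fun j => by
        have := he j; linarith
      rw [Finset.sum_congr rfl (fun j _ => this j), Finset.sum_sub_distrib,
        Finset.sum_const, Finset.card_univ, Fintype.card_fin, nsmul_eq_mul]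
    have h3 : (m : ℝ) * r = ((∑ t ∈ Finset.range m, t : ℕ) : ℝ) := by
      rw [hGauss m hm, hr]; ring
    have h4 : (n : ℝ) * s = ((∑ t ∈ Finset.range n, t : ℕ) : ℝ) := by
      rw [hGauss n hn, hs]; ring
    have h5 : ((∑ i, c i : ℕ) : ℝ) = ∑ i, (c i : ℝ) := Nat.cast_sum _ _
    have h6 : ((∑ j, e j : ℤ) : ℝ) = ∑ j, ((e j : ℤ) : ℝ) := Int.cast_sum _ _
    rw [h5, h6, ← h3, ← h4]
    rw [h1, h2] at hsum0
    linarith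
  have hsumZ : ((∑ i, c i : ℕ) : ℤ) + (∑ j, e j)
      = ((∑ t ∈ Finset.range m, t : ℕ) : ℤ) + ((∑ t ∈ Finset.range n, t : ℕ) : ℤ) := by
    exact_mod_cast hsum1
  -- shifted functions
  set c' : Fin m → ℕ := fun i => c i - μ with hc'_def
  have hc'inj : Function.Injective c' := by
    intro i i' h
    apply hcinj
    have h1 := hμle i
    have h2 := hμle i'
    simp only [hc'_def] at h
    omega
  have hsc' : ∑ i, c i = ∑ i, c' i + m * μ := by
    have h1 : ∀ i, c i = c' i + μ := by
      intro i
      have := hμle i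
      simp only [hc'_def]
      omega
    rw [Finset.sum_congr rfl (fun i _ => h1 i), Finset.sum_add_distrib,
      Finset.sum_const, Finset.card_univ, Fintype.card_fin, smul_eq_mul]
  have hse : (∑ j, e j) = ((∑ j, E j : ℕ) : ℤ) - n * μ := by
    have h1 : ∀ j, e j = (E j : ℤ) - μ := fun j => by have := hE j; omega
    rw [Finset.sum_congr rfl (fun j _ => h1 j), Finset.sum_sub_distrib,
      Finset.sum_const, Finset.card_univ, Fintype.card_fin, nsmul_eq_mul]
    push_cast
    ring
  obtain ⟨hA1, hA2⟩ := sum_lb c' hc'inj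
  obtain ⟨hB1, hB2⟩ := sum_lb E hEinj
  -- force μ = 0
  have hμ0 : μ = 0 := by
    have h1 : ((∑ i, c' i : ℕ) : ℤ) + (m : ℤ) * μ + (((∑ j, E j : ℕ) : ℤ) - (n : ℤ) * μ)
        = ((∑ t ∈ Finset.range m, t : ℕ) : ℤ) + ((∑ t ∈ Finset.range n, t : ℕ) : ℤ) := by
      rw [← hsumZ, hsc', hse]
      push_cast
      ring
    have h2 : ((∑ t ∈ Finset.range m, t : ℕ) : ℤ) ≤ ((∑ i, c' i : ℕ) : ℤ) := by
      exact_mod_cast hA1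
    have h3 : ((∑ t ∈ Finset.range n, t : ℕ) : ℤ) ≤ ((∑ j, E j : ℕ) : ℤ) := by
      exact_mod_cast hB1
    have h4 : (1 : ℤ) ≤ (m : ℤ) - (n : ℤ) := by
      have : (n : ℤ) < m := by exact_mod_cast hmn
      omega
    have h5 : (μ : ℤ) ≤ ((m : ℤ) - (n : ℤ)) * μ :=
      le_mul_of_one_le_left (by positivity) h4
    have h6 : ((m : ℤ) - (n : ℤ)) * μ = (m : ℤ) * μ - (n : ℤ) * μ := by ring
    have h7 : (μ : ℤ) ≤ 0 := by linarith
    omega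
  -- equalities forced
  have hceq : ∑ i, c' i = ∑ t ∈ Finset.range m, t := by
    have h1 : ((∑ i, c' i : ℕ) : ℤ) + ((∑ j, E j : ℕ) : ℤ)
        = ((∑ t ∈ Finset.range m, t : ℕ) : ℤ) + ((∑ t ∈ Finset.range n, t : ℕ) : ℤ) := by
      rw [← hsumZ, hsc', hse, hμ0]
      push_cast
      ring
    have h2 : (∑ i, c' i) + (∑ j, E j) = (∑ t ∈ Finset.range m, t) + ∑ t ∈ Finset.range n, t := by
      exact_mod_cast h1
    omega
  have hEeq : ∑ j, E j = ∑ t ∈ Finset.range n, t := by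
    have h1 : ((∑ i, c' i : ℕ) : ℤ) + ((∑ j, E j : ℕ) : ℤ)
        = ((∑ t ∈ Finset.range m, t : ℕ) : ℤ) + ((∑ t ∈ Finset.range n, t : ℕ) : ℤ) := by
      rw [← hsumZ, hsc', hse, hμ0]
      push_cast
      ring
    have h2 : (∑ i, c' i) + (∑ j, E j) = (∑ t ∈ Finset.range m, t) + ∑ t ∈ Finset.range n, t := by
      exact_mod_cast h1
    omega
  have hclt : ∀ i, c i < m := by
    intro i
    have h1 := hA2 hceq i
    have h2 := hμle i
    simp only [hc'_def] at h1
    omega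
  have hElt : ∀ j, E j < n := hB2 hEeq
  have heE : ∀ j, e j = (E j : ℤ) := by
    intro j
    have := hE j
    rw [hμ0] at this
    omega
  -- build the permutations
  have hσinj : Function.Injective (fun i : Fin m => (⟨c i, hclt i⟩ : Fin m)) := by
    intro i i' h
    exact hcinj (by simpa [Fin.ext_iff] using h)
  have hτinj : Function.Injective (fun j : Fin n => (⟨E j, hElt j⟩ : Fin n)) := by
    intro j j' h
    exact hEinj (by simpa [Fin.ext_iff] using h)
  have hσbij := Finite.injective_iff_bijective.mp hσinj
  have hτbij := Finite.injective_iff_bijective.mp hτinj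
  refine ⟨(Equiv.ofBijective _ hσbij).symm, (Equiv.ofBijective _ hτbij).symm, ?_⟩
  funext z
  cases z with
  | inl i =>
    show lam (Sum.inl i) = glAct m n _ _ (glRho m n) (Sum.inl i)
    simp only [glAct, Sum.map_inl, Equiv.symm_symm, Equiv.ofBijective_apply, glRho,
      Sum.elim_inl]
    have h1 := hc i
    rw [hr] at h1
    push_cast
    linarith
  | inr j =>
    show lam (Sum.inr j) = glAct m n _ _ (glRho m n) (Sum.inr j)
    simp only [glAct, Sum.map_inr, Equiv.symm_symm, Equiv.ofBijective_apply, glRho,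
      Sum.elim_inr]
    have h1 := he j
    have h2 := heE j
    rw [hs] at h1
    have h3 : ((e j : ℤ) : ℝ) = ((E j : ℕ) : ℝ) := by exact_mod_cast congrArg (fun t : ℤ => (t : ℝ)) h2
    push_cast
    push_cast at h3
    linarith
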